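/- Let k be a field and let A be a commutative k-algebra admitting two presentations A = colim_{α∈I} A_α and A = colim_{β∈J} A′_β as colimits of directed systems, indexed by directed preordered sets, of finite-type commutative k-algebras in which all transition homomorphisms induce universally open morphisms on prime spectra. Then for every β ∈ J there exists α₀ ∈ I such that for every α ≥ α₀ there is a k-algebra homomorphism g : A′_β → A_α whose composition with the canonical map A_α → A equals the canonical map A′_β → A and which induces a universally open morphism Spec A_α → Spec A′_β. -/

import Mathlib

open AlgebraicGeometry CategoryTheory

/-- A homomorphism of commutative rings `g : R →+* S` induces a universally open morphism on
prime spectra if the associated morphism of affine schemes `Spec S ⟶ Spec R` is universally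
open, i.e. every base change of it along an arbitrary morphism of schemes is an open map on
underlying topological spaces. -/
def InducesUniversallyOpenSpec {R S : Type} [CommRing R] [CommRing S] (g : R →+* S) : Prop :=
  (topologically @IsOpenMap).universally (Spec.map (CommRingCat.ofHom g))

section AuxGeom

open CategoryTheory.Limits

lemma aux_open_comp₃ {A B C D : Type*} [TopologicalSpace A] [TopologicalSpace B]
    [TopologicalSpace C] [TopologicalSpace D] {f : A → B} {g : B → C} {h : C → D}
    (hg : Continuous g) (h1 : IsOpenMap (g ∘ f)) (h2 : IsOpenMap (h ∘ g)) :
    IsOpenMap (h ∘ g ∘ f) := by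
  intro U hU
  have hsub : (g ∘ f) '' U ⊆ Set.range g := by rintro _ ⟨x, hx, rfl⟩; exact ⟨f x, rfl⟩
  have key : (h ∘ g ∘ f) '' U = (h ∘ g) '' (g ⁻¹' ((g ∘ f) '' U)) := by
    rw [Set.image_comp h g, Set.image_preimage_eq_inter_range,
      Set.inter_eq_self_of_subset_left hsub, Set.image_comp h (g ∘ f),
      Set.image_comp g f]
  rw [key]
  exact h2 _ (hg.isOpen_preimage _ (h1 U hU))

lemma aux_uo_comp₃ {X Y Z W : Scheme}
    (f : X ⟶ Y) (g : Y ⟶ Z) (h : Z ⟶ W)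
    (h1 : (topologically @IsOpenMap).universally (g ≫ h))
    (h2 : (topologically @IsOpenMap).universally (f ≫ g)) :
    (topologically @IsOpenMap).universally (f ≫ g ≫ h) := by
  intro X' W' i₁ i₂ c sq
  let b : pullback (g ≫ h) i₂ ⟶ pullback h i₂ :=
    pullback.lift (pullback.fst _ _ ≫ g) (pullback.snd _ _)
      (by rw [Category.assoc]; exact pullback.condition)
  let a : X' ⟶ pullback (g ≫ h) i₂ :=
    pullback.lift (i₁ ≫ f) c (by rw [Category.assoc]; exact sq.w.symm)
  have hab : a ≫ b ≫ pullback.snd h i₂ = c := by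
    simp only [a, b, pullback.lift_snd, pullback.lift_snd_assoc]
  have open1 : IsOpenMap (pullback.snd (g ≫ h) i₂).base :=
    h1 (pullback.fst _ _) i₂ (pullback.snd _ _) (IsPullback.of_hasPullback (g ≫ h) i₂).flip
  have sqab : IsPullback (a ≫ b) i₁ (pullback.fst h i₂) (f ≫ g) := by
    apply IsPullback.of_right (h₂₂ := h) (v₁₃ := i₂) (h₁₂ := pullback.snd h i₂)
    · rw [Category.assoc, hab, Category.assoc]; exact sq
    · simp only [a, b, pullback.lift_fst, pullback.lift_fst_assoc, Category.assoc]
    · exact (IsPullback.of_hasPullback h i₂).flip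
  have open2 : IsOpenMap (a ≫ b).base := h2 i₁ (pullback.fst h i₂) (a ≫ b) sqab
  show IsOpenMap c.base
  rw [← hab]
  have e1 : ((a ≫ b) ≫ pullback.snd h i₂).base =
      (pullback.snd h i₂).base ∘ (b.base ∘ a.base) := by
    simp [Scheme.Hom.comp_base, TopCat.hom_comp]
  rw [show (a ≫ b ≫ pullback.snd h i₂) = (a ≫ b) ≫ pullback.snd h i₂ by simp, e1]
  apply aux_open_comp₃ (g := b.base)
  · exact b.continuous
  · have : (b.base ∘ a.base) = (a ≫ b).base := by simp [Scheme.Hom.comp_base, TopCat.hom_comp]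
    rw [this]; exact open2
  · have : ((pullback.snd h i₂).base ∘ b.base) = (b ≫ pullback.snd h i₂).base := by
      simp [Scheme.Hom.comp_base, TopCat.hom_comp]
    rw [this, show b ≫ pullback.snd h i₂ = pullback.snd (g ≫ h) i₂ by simp only [b, pullback.lift_snd]]
    exact open1

end AuxGeom

lemma spec_ofHom_comp {R S T : Type} [CommRing R] [CommRing S] [CommRing T]
    (f : R →+* S) (g : S →+* T) :
    Spec.map (CommRingCat.ofHom (g.comp f)) =
      Spec.map (CommRingCat.ofHom g) ≫ Spec.map (CommRingCat.ofHom f) := by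
  rw [← Spec.map_comp]; rfl

section Sys

variable {k : Type} [Field k] {A : Type} [CommRing A] [Algebra k A]
variable {I : Type} [Preorder I] [IsDirected I (· ≤ ·)] [Nonempty I]
variable {A₁ : I → Type} [∀ i, CommRing (A₁ i)] [∀ i, Algebra k (A₁ i)]

/-- equalize two maps into a stage of a directed system -/
lemma sys_equalize (t₁ : ∀ i j : I, i ≤ j → (A₁ i →ₐ[k] A₁ j)) (ι₁ : ∀ i, A₁ i →ₐ[k] A)
    (ht₁_comp : ∀ (i j l : I) (hij : i ≤ j) (hjl : j ≤ l),
      (t₁ j l hjl).comp (t₁ i j hij) = t₁ i l (le_trans hij hjl))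
    (heq₁ : ∀ (i : I) (x y : A₁ i), ι₁ i x = ι₁ i y →
      ∃ j, ∃ hij : i ≤ j, t₁ i j hij x = t₁ i j hij y)
    {B : Type} [CommRing B] [Algebra k B] (hB : Algebra.FiniteType k B)
    {δ : I} (u v : B →ₐ[k] A₁ δ) (h : (ι₁ δ).comp u = (ι₁ δ).comp v) :
    ∃ δ', ∃ hδ : δ ≤ δ', (t₁ δ δ' hδ).comp u = (t₁ δ δ' hδ).comp v := by
  classical
  obtain ⟨s, hs⟩ := hB.out
  have H : ∀ x : B, ∃ j, ∃ hij : δ ≤ j,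
      x ∈ s → t₁ δ j hij (u x) = t₁ δ j hij (v x) := by
    intro x
    by_cases hx : x ∈ s
    · obtain ⟨j, hij, hj⟩ := heq₁ δ (u x) (v x) (AlgHom.congr_fun h x)
      exact ⟨j, hij, fun _ => hj⟩
    · exact ⟨δ, le_rfl, fun hc => absurd hc hx⟩
  choose jf hjf hjprop using H
  obtain ⟨δ', hδ'⟩ := Finset.exists_le (insert δ (s.image jf))
  have hδδ' : δ ≤ δ' := hδ' δ (Finset.mem_insert_self _ _)
  refine ⟨δ', hδδ', ?_⟩
  have hag : ∀ x ∈ s, (t₁ δ δ' hδδ') (u x) = (t₁ δ δ' hδδ') (v x) := by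
    intro x hx
    have hjδ' : jf x ≤ δ' := hδ' _ (Finset.mem_insert_of_mem (Finset.mem_image_of_mem _ hx))
    have e1 := AlgHom.congr_fun (ht₁_comp δ (jf x) δ' (hjf x) hjδ') (u x)
    have e2 := AlgHom.congr_fun (ht₁_comp δ (jf x) δ' (hjf x) hjδ') (v x)
    simp only [AlgHom.comp_apply] at e1 e2
    rw [← e1, ← e2, hjprop x hx]
  have hsub : (s : Set B) ⊆ (AlgHom.equalizer ((t₁ δ δ' hδδ').comp u) ((t₁ δ δ' hδδ').comp v)
      : Subalgebra k B) := by
    intro x hx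
    simpa [AlgHom.mem_equalizer] using hag x hx
  have htop := Algebra.adjoin_le hsub
  rw [hs] at htop
  ext x
  exact htop (Algebra.mem_top (A := B) (x := x))

/-- lift a finitely presented algebra over `A` into the system -/
lemma sys_lift (t₁ : ∀ i j : I, i ≤ j → (A₁ i →ₐ[k] A₁ j)) (ι₁ : ∀ i, A₁ i →ₐ[k] A)
    (ht₁_comp : ∀ (i j l : I) (hij : i ≤ j) (hjl : j ≤ l),
      (t₁ j l hjl).comp (t₁ i j hij) = t₁ i l (le_trans hij hjl))
    (hι₁ : ∀ (i j : I) (hij : i ≤ j), (ι₁ j).comp (t₁ i j hij) = ι₁ i)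
    (hsurj₁ : ∀ a : A, ∃ i x, ι₁ i x = a)
    (heq₁ : ∀ (i : I) (x y : A₁ i), ι₁ i x = ι₁ i y →
      ∃ j, ∃ hij : i ≤ j, t₁ i j hij x = t₁ i j hij y)
    {B : Type} [CommRing B] [Algebra k B] (hB : Algebra.FinitePresentation k B)
    (ι : B →ₐ[k] A) (i₀ : I) :
    ∃ α, i₀ ≤ α ∧ ∃ g : B →ₐ[k] A₁ α, (ι₁ α).comp g = ι := by
  classical
  obtain ⟨n, p, hpsurj, hpker⟩ := hB.out
  choose idx y hy using fun j : Fin n => hsurj₁ (ι (p (MvPolynomial.X j)))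
  obtain ⟨ᾰ, hᾰ⟩ := Finset.exists_le (insert i₀ (Finset.univ.image idx))
  have hi₀ : i₀ ≤ ᾰ := hᾰ _ (Finset.mem_insert_self _ _)
  have hidx : ∀ j, idx j ≤ ᾰ := fun j =>
    hᾰ _ (Finset.mem_insert_of_mem (Finset.mem_image_of_mem _ (Finset.mem_univ j)))
  set z : Fin n → A₁ ᾰ := fun j => t₁ (idx j) ᾰ (hidx j) (y j) with hz
  set φ : MvPolynomial (Fin n) k →ₐ[k] A₁ ᾰ := MvPolynomial.aeval z with hφdef
  have hφ : (ι₁ ᾰ).comp φ = ι.comp p := by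
    apply MvPolynomial.algHom_ext
    intro j
    have := AlgHom.congr_fun (hι₁ (idx j) ᾰ (hidx j)) (y j)
    simp only [AlgHom.comp_apply] at this ⊢
    simp only [hφdef, MvPolynomial.aeval_X, hz]
    rw [this, hy j]
  obtain ⟨G, hG⟩ := hpker
  have Hq : ∀ q : MvPolynomial (Fin n) k, ∃ j, ∃ hij : ᾰ ≤ j,
      q ∈ G → t₁ ᾰ j hij (φ q) = 0 := by
    intro q
    by_cases hq : q ∈ G
    · have hker : p q = 0 := by
        have : q ∈ RingHom.ker p.toRingHom := by
          rw [← hG]; exact Ideal.subset_span hq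
        simpa [RingHom.mem_ker] using this
      have h0 : ι₁ ᾰ (φ q) = ι₁ ᾰ 0 := by
        have := AlgHom.congr_fun hφ q
        simp only [AlgHom.comp_apply] at this
        rw [this, hker, map_zero, map_zero]
      obtain ⟨j, hij, hj⟩ := heq₁ ᾰ (φ q) 0 h0
      exact ⟨j, hij, fun _ => by rw [hj, map_zero]⟩
    · exact ⟨ᾰ, le_rfl, fun hc => absurd hc hq⟩
  choose jf hjf hjprop using Hq
  obtain ⟨α, hα⟩ := Finset.exists_le (insert ᾰ (G.image jf))
  have hᾰα : ᾰ ≤ α := hα _ (Finset.mem_insert_self _ _)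
  refine ⟨α, le_trans hi₀ hᾰα, ?_⟩
  set ψ : MvPolynomial (Fin n) k →ₐ[k] A₁ α := (t₁ ᾰ α hᾰα).comp φ with hψdef
  have hkerψ : ∀ a ∈ RingHom.ker p.toRingHom, ψ a = 0 := by
    have hle : RingHom.ker p.toRingHom ≤ RingHom.ker ψ.toRingHom := by
      rw [← hG]
      apply Ideal.span_le.mpr
      intro q hq
      have hjα : jf q ≤ α := hα _ (Finset.mem_insert_of_mem (Finset.mem_image_of_mem _ hq))
      have e1 := AlgHom.congr_fun (ht₁_comp ᾰ (jf q) α (hjf q) hjα) (φ q)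
      simp only [AlgHom.comp_apply] at e1
      have : ψ q = 0 := by
        simp only [hψdef, AlgHom.comp_apply]
        rw [← e1, hjprop q hq, map_zero]
      simpa [RingHom.mem_ker] using this
    exact fun a ha => hle ha
  have hkerp : RingHom.ker p = RingHom.ker p.toRingHom := rfl
  set L : (MvPolynomial (Fin n) k ⧸ RingHom.ker p.toRingHom) →ₐ[k] A₁ α :=
    Ideal.Quotient.liftₐ (RingHom.ker p.toRingHom) ψ hkerψ with hLdef
  set e : (MvPolynomial (Fin n) k ⧸ RingHom.ker p.toRingHom) ≃ₐ[k] B :=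
    Ideal.quotientKerAlgEquivOfSurjective hpsurj with hedef
  refine ⟨L.comp e.symm.toAlgHom, ?_⟩
  ext b
  obtain ⟨x, rfl⟩ := hpsurj b
  have he : e (Ideal.Quotient.mk (RingHom.ker p.toRingHom) x) = p x := by
    rfl
  have hesymm : e.symm (p x) = Ideal.Quotient.mk (RingHom.ker p.toRingHom) x := by
    rw [← he, AlgEquiv.symm_apply_apply]
  have hL : L (Ideal.Quotient.mk (RingHom.ker p.toRingHom) x) = ψ x := by
    rw [hLdef]; rfl
  have hcomp := AlgHom.congr_fun (hι₁ ᾰ α hᾰα) (φ x)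
  simp only [AlgHom.comp_apply, AlgEquiv.toAlgHom_eq_coe, AlgHom.coe_coe, AlgEquiv.coe_toAlgHom] at hcomp ⊢
  rw [hesymm, hL]
  have := AlgHom.congr_fun hφ x
  simp only [AlgHom.comp_apply] at this
  simp only [hψdef, AlgHom.comp_apply]
  rw [hcomp, this]

end Sys

theorem statement15 (k : Type) [Field k]
    (A : Type) [CommRing A] [Algebra k A]
    -- a presentation `A = colim_{α ∈ I} A_α` with universally open transitions
    (I : Type) [Preorder I] [IsDirected I (· ≤ ·)] [Nonempty I]
    (A₁ : I → Type) [∀ i, CommRing (A₁ i)] [∀ i, Algebra k (A₁ i)]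
    (t₁ : ∀ i j : I, i ≤ j → (A₁ i →ₐ[k] A₁ j)) (ι₁ : ∀ i, A₁ i →ₐ[k] A)
    (ht₁_refl : ∀ i, t₁ i i le_rfl = AlgHom.id k (A₁ i))
    (ht₁_comp : ∀ (i j l : I) (hij : i ≤ j) (hjl : j ≤ l),
      (t₁ j l hjl).comp (t₁ i j hij) = t₁ i l (le_trans hij hjl))
    (hι₁ : ∀ (i j : I) (hij : i ≤ j), (ι₁ j).comp (t₁ i j hij) = ι₁ i)
    (hft₁ : ∀ i, Algebra.FiniteType k (A₁ i))
    (huo₁ : ∀ (i j : I) (hij : i ≤ j), InducesUniversallyOpenSpec (t₁ i j hij).toRingHom)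
    (hsurj₁ : ∀ a : A, ∃ i x, ι₁ i x = a)
    (heq₁ : ∀ (i : I) (x y : A₁ i), ι₁ i x = ι₁ i y →
      ∃ j, ∃ hij : i ≤ j, t₁ i j hij x = t₁ i j hij y)
    -- a presentation `A = colim_{β ∈ J} A′_β` with universally open transitions
    (J : Type) [Preorder J] [IsDirected J (· ≤ ·)] [Nonempty J]
    (A₂ : J → Type) [∀ b, CommRing (A₂ b)] [∀ b, Algebra k (A₂ b)]
    (t₂ : ∀ b c : J, b ≤ c → (A₂ b →ₐ[k] A₂ c)) (ι₂ : ∀ b, A₂ b →ₐ[k] A)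
    (ht₂_refl : ∀ b, t₂ b b le_rfl = AlgHom.id k (A₂ b))
    (ht₂_comp : ∀ (b c d : J) (hbc : b ≤ c) (hcd : c ≤ d),
      (t₂ c d hcd).comp (t₂ b c hbc) = t₂ b d (le_trans hbc hcd))
    (hι₂ : ∀ (b c : J) (hbc : b ≤ c), (ι₂ c).comp (t₂ b c hbc) = ι₂ b)
    (hft₂ : ∀ b, Algebra.FiniteType k (A₂ b))
    (huo₂ : ∀ (b c : J) (hbc : b ≤ c), InducesUniversallyOpenSpec (t₂ b c hbc).toRingHom)
    (hsurj₂ : ∀ a : A, ∃ b x, ι₂ b x = a)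
    (heq₂ : ∀ (b : J) (x y : A₂ b), ι₂ b x = ι₂ b y →
      ∃ c, ∃ hbc : b ≤ c, t₂ b c hbc x = t₂ b c hbc y) :
    ∀ β : J, ∃ α₀ : I, ∀ α : I, α₀ ≤ α →
      ∃ g : A₂ β →ₐ[k] A₁ α, (ι₁ α).comp g = ι₂ β ∧
        InducesUniversallyOpenSpec g.toRingHom := by
  intro β
  have hfpI : ∀ i, Algebra.FinitePresentation k (A₁ i) := fun i =>
    Algebra.FinitePresentation.of_finiteType.mp (hft₁ i)
  have hfpJ : ∀ b, Algebra.FinitePresentation k (A₂ b) := fun b =>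
    Algebra.FinitePresentation.of_finiteType.mp (hft₂ b)
  -- Step 1 : a compatible lift `g₀` of `ι₂ β` into the first system
  obtain ⟨α', -, g₀, hg₀⟩ :=
    sys_lift t₁ ι₁ ht₁_comp hι₁ hsurj₁ heq₁ (hfpJ β) (ι₂ β) (Classical.arbitrary I)
  -- Step 2 : a compatible lift of `ι₁ α'` into the second system, above `β`
  obtain ⟨γ, hβγ, f₁, hf₁⟩ :=
    sys_lift t₂ ι₂ ht₂_comp hι₂ hsurj₂ heq₂ (hfpI α') (ι₁ α') β
  -- Step 3 : equalize `f₁ ∘ g₀` with the transition `t₂ β γ`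
  have hcomp3 : (ι₂ γ).comp (f₁.comp g₀) = (ι₂ γ).comp (t₂ β γ hβγ) := by
    rw [← AlgHom.comp_assoc, hf₁, hg₀, hι₂]
  obtain ⟨γ', hγγ', he3⟩ :=
    sys_equalize t₂ ι₂ ht₂_comp heq₂ (hft₂ β) (f₁.comp g₀) (t₂ β γ hβγ) hcomp3
  have hβγ' : β ≤ γ' := le_trans hβγ hγγ'
  set f' : A₁ α' →ₐ[k] A₂ γ' := (t₂ γ γ' hγγ').comp f₁ with hf'def
  have hf'g₀ : f'.comp g₀ = t₂ β γ' hβγ' := by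
    rw [hf'def, AlgHom.comp_assoc, he3, ht₂_comp]
  have hf'ι : (ι₂ γ').comp f' = ι₁ α' := by
    rw [hf'def, ← AlgHom.comp_assoc, hι₂, hf₁]
  -- Step 4 : a compatible lift of `ι₂ γ'` into the first system, above `α'`
  obtain ⟨α₁', hα'α₁', g₁', hg₁'⟩ :=
    sys_lift t₁ ι₁ ht₁_comp hι₁ hsurj₁ heq₁ (hfpJ γ') (ι₂ γ') α'
  -- Step 5 : equalize `g₁' ∘ f'` with the transition `t₁ α' α₁'`
  have hcomp5 : (ι₁ α₁').comp (g₁'.comp f') = (ι₁ α₁').comp (t₁ α' α₁' hα'α₁') := by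
    rw [← AlgHom.comp_assoc, hg₁', hf'ι, hι₁]
  obtain ⟨α₁, hα₁'α₁, he5⟩ :=
    sys_equalize t₁ ι₁ ht₁_comp heq₁ (hft₁ α') (g₁'.comp f') (t₁ α' α₁' hα'α₁') hcomp5
  have hα'α₁ : α' ≤ α₁ := le_trans hα'α₁' hα₁'α₁
  set g₁ : A₂ γ' →ₐ[k] A₁ α₁ := (t₁ α₁' α₁ hα₁'α₁).comp g₁' with hg₁def
  have hg₁f' : g₁.comp f' = t₁ α' α₁ hα'α₁ := by
    rw [hg₁def, AlgHom.comp_assoc, he5, ht₁_comp]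
  have hg₁ι : (ι₁ α₁).comp g₁ = ι₂ γ' := by
    rw [hg₁def, ← AlgHom.comp_assoc, hι₁, hg₁']
  -- conclusion
  refine ⟨α₁, fun α hα => ?_⟩
  have hα'α : α' ≤ α := le_trans hα'α₁ hα
  set s₂ : A₂ γ' →ₐ[k] A₁ α := (t₁ α₁ α hα).comp g₁ with hs₂def
  have hs₂f' : s₂.comp f' = t₁ α' α hα'α := by
    rw [hs₂def, AlgHom.comp_assoc, hg₁f', ht₁_comp]
  have hs₂ι : (ι₁ α).comp s₂ = ι₂ γ' := by
    rw [hs₂def, ← AlgHom.comp_assoc, hι₁, hg₁ι]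
  refine ⟨s₂.comp (t₂ β γ' hβγ'), ?_, ?_⟩
  · rw [← AlgHom.comp_assoc, hs₂ι, hι₂]
  · -- universal openness
    have hfact : s₂.comp (t₂ β γ' hβγ') = (s₂.comp f').comp g₀ := by
      rw [AlgHom.comp_assoc s₂ f' g₀, hf'g₀]
    rw [hfact]
    unfold InducesUniversallyOpenSpec
    have hT : ((s₂.comp f').comp g₀).toRingHom =
        (s₂.toRingHom.comp f'.toRingHom).comp g₀.toRingHom := rfl
    rw [hT, spec_ofHom_comp, spec_ofHom_comp, Category.assoc]
    apply aux_uo_comp₃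
    · -- `Spec (f') ≫ Spec (g₀)` is the universally open `Spec (t₂ β γ')`
      rw [← spec_ofHom_comp]
      have : f'.toRingHom.comp g₀.toRingHom = (t₂ β γ' hβγ').toRingHom := by
        rw [← hf'g₀]; rfl
      rw [this]
      exact huo₂ β γ' hβγ'
    · -- `Spec (s₂) ≫ Spec (f')` is the universally open `Spec (t₁ α' α)`
      rw [← spec_ofHom_comp]
      have : s₂.toRingHom.comp f'.toRingHom = (t₁ α' α hα'α).toRingHom := by
        rw [← hs₂f']; rfl
      rw [this]
      exact huo₁ α' α hα'α
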